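/- Let A and B be positive definite Hermitian n×n complex matrices. Then trace(A⁻¹ B) ≥ n (det B / det A)^{1/n}. -/

import Mathlib

open MeasureTheory Complex Metric Matrix
open scoped ComplexOrder

noncomputable section

instance (n : ℕ) : MeasureSpace (EuclideanSpace ℂ (Fin n)) where
  volume := Measure.map (WithLp.toLp 2) (volume : Measure (Fin n → ℂ))

/-- The Wirtinger derivative `∂f/∂z_j`. -/
def wdz {n : ℕ} (j : Fin n) (f : EuclideanSpace ℂ (Fin n) → ℂ)
    (z : EuclideanSpace ℂ (Fin n)) : ℂ :=
  (1 / 2) * (fderiv ℝ f z (EuclideanSpace.single j 1)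
    - Complex.I * fderiv ℝ f z (EuclideanSpace.single j Complex.I))

/-- The conjugate Wirtinger derivative `∂f/∂z̄_j`. -/
def wdzbar {n : ℕ} (j : Fin n) (f : EuclideanSpace ℂ (Fin n) → ℂ)
    (z : EuclideanSpace ℂ (Fin n)) : ℂ :=
  (1 / 2) * (fderiv ℝ f z (EuclideanSpace.single j 1)
    + Complex.I * fderiv ℝ f z (EuclideanSpace.single j Complex.I))

/-- The complex Hessian `(u_{i j̄}) = (∂²u/∂z_i∂z̄_j)` of a real-valued function. -/
def cHess {n : ℕ} (u : EuclideanSpace ℂ (Fin n) → ℝ) (z : EuclideanSpace ℂ (Fin n)) :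
    Matrix (Fin n) (Fin n) ℂ :=
  Matrix.of fun i j => wdz i (fun w => wdzbar j (fun v => ((u v : ℝ) : ℂ)) w) z

/-- `Δu = Σ_j u_{j j̄}` (one quarter of the real Laplacian). -/
def cLap {n : ℕ} (u : EuclideanSpace ℂ (Fin n) → ℝ) (z : EuclideanSpace ℂ (Fin n)) : ℝ :=
  ((cHess u z).trace).re

/-- `(u^{i j̄})`, the transposed inverse of the complex Hessian. -/
def cHessInvT {n : ℕ} (u : EuclideanSpace ℂ (Fin n) → ℝ) (z : EuclideanSpace ℂ (Fin n)) :
    Matrix (Fin n) (Fin n) ℂ :=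
  ((cHess u z)⁻¹)ᵀ


/-- Conjugating a positive definite matrix by an invertible matrix preserves
positive definiteness. -/
lemma posDef_conj_of_isUnit {n : ℕ} {M N : Matrix (Fin n) (Fin n) ℂ}
    (hM : M.PosDef) (hN : IsUnit N) : (Nᴴ * M * N).PosDef := by
  exact hM.conjTranspose_mul_mul_same (Matrix.mulVec_injective_iff_isUnit.mpr hN)

lemma posDef_trace_re_eq {n : ℕ} {C : Matrix (Fin n) (Fin n) ℂ} (hC : C.IsHermitian) :
    C.trace.re = ∑ i, hC.eigenvalues i := by
  have h := hC.spectral_theorem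
  have htr : C.trace = Matrix.trace (Matrix.diagonal ((↑) ∘ hC.eigenvalues :
      Fin n → ℂ)) := by
    conv_lhs => rw [h]
    rw [Unitary.conjStarAlgAut_apply, Matrix.trace_mul_comm, ← mul_assoc]
    have : (star (Matrix.IsHermitian.eigenvectorUnitary hC : Matrix (Fin n) (Fin n) ℂ)) *
        (Matrix.IsHermitian.eigenvectorUnitary hC : Matrix (Fin n) (Fin n) ℂ) = 1 := by
      simpa using Unitary.coe_star_mul_self (Matrix.IsHermitian.eigenvectorUnitary hC)
    rw [this, one_mul]
    rfl
  rw [htr, Matrix.trace_diagonal]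
  simp

/-- For positive definite Hermitian matrices `A`, `B`:
`trace(A⁻¹ B) ≥ n (det B / det A)^{1/n}` (arithmetic–geometric mean inequality). -/
theorem trace_inv_mul_ge_det_ratio_rpow
    (n : ℕ) (A B : Matrix (Fin n) (Fin n) ℂ) (hA : A.PosDef) (hB : B.PosDef) :
    (n : ℝ) * (B.det.re / A.det.re) ^ ((1 : ℝ) / n) ≤ ((A⁻¹ * B).trace).re := by
  rcases Nat.eq_zero_or_pos n with hn | hn
  · subst hn; simp [Matrix.trace]
  -- set up the square root of A⁻¹
  have hAinv : (A⁻¹).PosDef := hA.inv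
  set S : Matrix (Fin n) (Fin n) ℂ := (open scoped MatrixOrder in CFC.sqrt A⁻¹) with hSdef
  have hSps : S.PosSemidef := by
    open scoped MatrixOrder in exact Matrix.nonneg_iff_posSemidef.mp (CFC.sqrt_nonneg _)
  have hSS : S * S = A⁻¹ := by
    open scoped MatrixOrder in exact CFC.sqrt_mul_sqrt_self _ hAinv.posSemidef.nonneg
  have hSH : Sᴴ = S := hSps.isHermitian
  have hSunit : IsUnit S := by
    have hdet : S.det * S.det = (A⁻¹).det := by rw [← Matrix.det_mul, hSS]
    have : S.det ≠ 0 := by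
      intro h
      have := hA.inv.det_pos.ne'
      rw [← hdet, h, mul_zero] at this
      exact this rfl
    exact (Matrix.isUnit_iff_isUnit_det S).mpr this.isUnit
  set C : Matrix (Fin n) (Fin n) ℂ := S * B * S with hCdef
  have hC : C.PosDef := by
    have := posDef_conj_of_isUnit hB hSunit
    rwa [hSH] at this
  -- trace identity
  have htr : (A⁻¹ * B).trace = C.trace := by
    rw [hCdef, ← hSS, mul_assoc, Matrix.trace_mul_comm]
  set lam := hC.1.eigenvalues with hlam
  have hlampos : ∀ i, 0 < lam i := fun i => hC.eigenvalues_pos i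
  have htrre : ((A⁻¹ * B).trace).re = ∑ i, lam i := by
    rw [htr]; exact posDef_trace_re_eq hC.1
  -- determinant identity
  have hdetA : A.det = (A.det.re : ℂ) := by
    have h := hA.det_pos
    rw [Complex.lt_def] at h
    exact Complex.ext rfl (by simpa using h.2.symm)
  have hdetB : B.det = (B.det.re : ℂ) := by
    have h := hB.det_pos
    rw [Complex.lt_def] at h
    exact Complex.ext rfl (by simpa using h.2.symm)
  have hdetApos : 0 < A.det.re := by
    have h := hA.det_pos; rw [Complex.lt_def] at h; simpa using h.1
  have hdetBpos : 0 < B.det.re := by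
    have h := hB.det_pos; rw [Complex.lt_def] at h; simpa using h.1
  have hprod : (∏ i, lam i : ℝ) = B.det.re / A.det.re := by
    have hCd : C.det = (∏ i, lam i : ℝ) := by
      rw [hC.1.det_eq_prod_eigenvalues]; push_cast; rfl
    have hCd2 : C.det = A.det⁻¹ * B.det := by
      rw [hCdef, Matrix.det_mul, Matrix.det_mul]
      have : S.det * S.det = (A⁻¹).det := by rw [← Matrix.det_mul, hSS]
      rw [mul_comm S.det B.det, mul_assoc, this, Matrix.det_nonsing_inv,
        mul_comm, Ring.inverse_eq_inv']
    have : ((∏ i, lam i : ℝ) : ℂ) = ((B.det.re / A.det.re : ℝ) : ℂ) := by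
      rw [← hCd, hCd2, hdetA, hdetB]
      push_cast
      simp [div_eq_inv_mul]
    exact_mod_cast this
  rw [htrre, ← hprod]
  -- AM-GM
  have hn' : (0:ℝ) < n := by exact_mod_cast hn
  have key : (∏ i, lam i) ^ ((1:ℝ)/n) ≤ (∑ i, ((1:ℝ)/n) * lam i) := by
    have h := Real.geom_mean_le_arith_mean_weighted Finset.univ (fun _ => (1:ℝ)/n) lam
      (fun i _ => by positivity)
      (by simp [Finset.sum_const]; field_simp)
      (fun i _ => (hlampos i).le)
    calc (∏ i, lam i) ^ ((1:ℝ)/n)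
        = ∏ i, lam i ^ ((1:ℝ)/n) := by
          rw [← Real.finset_prod_rpow _ _ (fun i _ => (hlampos i).le)]
      _ ≤ ∑ i, ((1:ℝ)/n) * lam i := h
  calc (n:ℝ) * (∏ i, lam i) ^ ((1:ℝ)/n)
      ≤ (n:ℝ) * ∑ i, ((1:ℝ)/n) * lam i := by
        exact mul_le_mul_of_nonneg_left key (le_of_lt hn')
    _ = ∑ i, lam i := by
        rw [Finset.mul_sum]
        congr 1; ext i; field_simp
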